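/- Let Z(y) = 1 - Σ_{n≥1} y^n v_n be a formal power series with coefficients in a unital associative ℂ-algebra A (v_n ∈ A), viewed in A[[x,y]]. Then the generating function R(x,y) = Σ_{m≥1} Σ_{n≥0} x^n y^m R^{n+m}_m(v) + 1/(1-x), where R^l_m(v) = Σ_{k=1}^m C(l-m+k, k) P^{(k)}_m(v), satisfies (Z(y) - x)·R(x,y) = 1, i.e., R(x,y) is the resolvent of Z(y). -/

import Mathlib

/-- The noncommutative symmetric polynomial
`P_m^{(k)}(v) = Σ_{j_1+···+j_k = m, j_i ≥ 1} v_{j_1}···v_{j_k}`. -/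
noncomputable def Pp {A : Type*} [Ring A] (v : ℕ → A) (k m : ℕ) : A :=
  ∑ j : Fin k → Fin (m + 1),
    if (∀ i, 1 ≤ (j i : ℕ)) ∧ (∑ i, (j i : ℕ)) = m then
      (List.ofFn fun i => v ((j i : ℕ))).prod
    else 0

/-- `R^l_m(v) = Σ_{k=1}^m C(l-m+k, k) P^{(k)}_m(v)` (with `C = 0` when the
top entry is less than the bottom one, as encoded by `Nat.choose` and
truncated subtraction). -/
noncomputable def Rp {A : Type*} [Ring A] (v : ℕ → A) (l m : ℕ) : A :=
  ∑ k ∈ Finset.Icc 1 m, ((l + k - m).choose k) • Pp v k m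

/-- `Z(y) = 1 - Σ_{n≥1} y^n v_n`, as a power series in `y` with coefficients in `A`. -/
noncomputable def Zy {A : Type*} [Ring A] (v : ℕ → A) : PowerSeries A :=
  PowerSeries.mk fun m => if m = 0 then 1 else -(v m)

/-- The generating function `R(x,y) = Σ_{m≥1} Σ_{n≥0} x^n y^m R^{n+m}_m(v) + 1/(1-x)`,
viewed as an element of `A[[y]][[x]]` (outer variable `x`, inner variable `y`). -/
noncomputable def Rser {A : Type*} [Ring A] (v : ℕ → A) : PowerSeries (PowerSeries A) :=
  PowerSeries.mk fun n => PowerSeries.mk fun m => if m = 0 then 1 else Rp v (n + m) m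

section
variable {A : Type*} [Ring A] (v : ℕ → A)

lemma Pp_eq_zero {k m : ℕ} (h : m < k) : Pp v k m = 0 := by
  apply Finset.sum_eq_zero
  intro j _
  rw [if_neg]
  rintro ⟨h1, h2⟩
  have : k ≤ ∑ i, (j i : ℕ) := by
    calc k = ∑ _i : Fin k, 1 := by simp
    _ ≤ ∑ i, (j i : ℕ) := Finset.sum_le_sum fun i _ => h1 i
  omega

lemma Pp_zero (m : ℕ) : Pp v 0 m = if m = 0 then 1 else 0 := by
  rw [Pp, Finset.univ_unique, Finset.sum_singleton]
  simp [eq_comm]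

lemma Pp_cast (k : ℕ) {m M : ℕ} (h : m ≤ M) :
    Pp v k m = ∑ j : Fin k → Fin (M + 1),
      if (∀ i, 1 ≤ (j i : ℕ)) ∧ (∑ i, (j i : ℕ)) = m then
        (List.ofFn fun i => v ((j i : ℕ))).prod
      else 0 := by
  rw [Pp, ← Finset.sum_filter, ← Finset.sum_filter]
  refine Finset.sum_nbij' (fun j i => Fin.castLE (by omega) (j i))
    (fun J i => ⟨min (J i : ℕ) m, by omega⟩) ?_ ?_ ?_ ?_ ?_
  · intro j hj
    simp only [Finset.mem_filter, Finset.mem_univ, true_and, Fin.coe_castLE] at hj ⊢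
    exact hj
  · intro J hJ
    simp only [Finset.mem_filter, Finset.mem_univ, true_and] at hJ ⊢
    obtain ⟨h1, h2⟩ := hJ
    have hle : ∀ i, (J i : ℕ) ≤ m := by
      intro i
      have := Finset.single_le_sum (f := fun i => (J i : ℕ)) (fun _ _ => Nat.zero_le _) (Finset.mem_univ i)
      beta_reduce at this
      omega
    constructor
    · intro i; simpa [Nat.min_eq_left (hle i)] using h1 i
    · calc (∑ i, min (J i : ℕ) m) = ∑ i, (J i : ℕ) := by
            exact Finset.sum_congr rfl fun i _ => Nat.min_eq_left (hle i)
      _ = m := h2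
  · intro j hj
    simp only [Finset.mem_filter, Finset.mem_univ, true_and] at hj
    have hle : ∀ i, (j i : ℕ) ≤ m := by
      intro i
      have h2 := hj.2
      have := Finset.single_le_sum (f := fun i => (j i : ℕ)) (fun _ _ => Nat.zero_le _) (Finset.mem_univ i)
      beta_reduce at this
      omega

    funext i
    ext
    simp [Nat.min_eq_left (hle i)]
  · intro J hJ
    simp only [Finset.mem_filter, Finset.mem_univ, true_and] at hJ
    have hle : ∀ i, (J i : ℕ) ≤ m := by
      intro i
      have h2 := hJ.2
      have := Finset.single_le_sum (f := fun i => (J i : ℕ)) (fun _ _ => Nat.zero_le _) (Finset.mem_univ i)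
      beta_reduce at this
      omega
    funext i
    ext
    simp [Nat.min_eq_left (hle i)]
  · intro j _
    simp

lemma Pp_succ (k m : ℕ) :
    Pp v (k + 1) m = ∑ a ∈ Finset.Icc 1 m, v a * Pp v k (m - a) := by
  rw [Pp]
  rw [← Equiv.sum_comp (Fin.consEquiv (fun _ : Fin (k+1) => Fin (m + 1)))]
  rw [Fintype.sum_prod_type]
  have step : ∀ a : Fin (m + 1), ∀ t : Fin k → Fin (m + 1),
      (if (∀ i, 1 ≤ ((Fin.consEquiv (fun _ : Fin (k+1) => Fin (m+1)) (a, t)) i : ℕ)) ∧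
          (∑ i, ((Fin.consEquiv (fun _ : Fin (k+1) => Fin (m+1)) (a, t)) i : ℕ)) = m then
        (List.ofFn fun i => v (((Fin.consEquiv (fun _ : Fin (k+1) => Fin (m+1)) (a, t)) i : ℕ))).prod
      else 0)
      = if (1 ≤ (a : ℕ) ∧ (a : ℕ) + ∑ i, (t i : ℕ) = m) ∧ (∀ i, 1 ≤ (t i : ℕ)) ∧ (∑ i, (t i : ℕ)) = m - (a : ℕ) then
          v a * (List.ofFn fun i => v ((t i : ℕ))).prod else 0 := by
    intro a t
    simp only [Fin.consEquiv_apply, Fin.forall_fin_succ, Fin.cons_zero, Fin.cons_succ,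
      Fin.sum_univ_succ, List.ofFn_succ, List.prod_cons]
    congr 1
    · rw [eq_iff_iff]; constructor
      · rintro ⟨⟨h0, h1⟩, h2⟩; exact ⟨⟨h0, by omega⟩, h1, by omega⟩
      · rintro ⟨⟨h0, h2⟩, h1, h3⟩; exact ⟨⟨h0, h1⟩, by omega⟩
  simp only [step]
  rw [← Finset.sum_range (n := m + 1) (f := fun a => ∑ t : Fin k → Fin (m+1),
      if (1 ≤ a ∧ a + ∑ i, (t i : ℕ) = m) ∧ (∀ i, 1 ≤ (t i : ℕ)) ∧ (∑ i, (t i : ℕ)) = m - a then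
        v a * (List.ofFn fun i => v ((t i : ℕ))).prod else 0)]
  have hsub : Finset.Icc 1 m ⊆ Finset.range (m + 1) := by
    intro a ha
    simp only [Finset.mem_Icc] at ha
    exact Finset.mem_range.mpr (by omega)
  have hvan : ∀ a ∈ Finset.range (m + 1), a ∉ Finset.Icc 1 m →
      (∑ t : Fin k → Fin (m+1),
        if (1 ≤ a ∧ a + ∑ i, (t i : ℕ) = m) ∧ (∀ i, 1 ≤ (t i : ℕ)) ∧ (∑ i, (t i : ℕ)) = m - a then
          v a * (List.ofFn fun i => v ((t i : ℕ))).prod else 0) = 0 := by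
    intro a _ ha
    apply Finset.sum_eq_zero
    intro t _
    rw [if_neg]
    rintro ⟨⟨h1, h2⟩, -⟩
    exact ha (Finset.mem_Icc.mpr ⟨h1, by omega⟩)
  rw [← Finset.sum_subset hsub hvan]
  apply Finset.sum_congr rfl
  intro a ha
  simp only [Finset.mem_Icc] at ha
  have hc : ∀ t : Fin k → Fin (m+1),
      (((1 ≤ a ∧ a + ∑ i, (t i : ℕ) = m) ∧ (∀ i, 1 ≤ (t i : ℕ)) ∧ (∑ i, (t i : ℕ)) = m - a))
      ↔ ((∀ i, 1 ≤ (t i : ℕ)) ∧ (∑ i, (t i : ℕ)) = m - a) := by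
    intro t
    constructor
    · rintro ⟨-, h⟩; exact h
    · rintro ⟨h1, h2⟩; exact ⟨⟨ha.1, by omega⟩, h1, h2⟩
  simp only [hc]
  rw [Pp_cast v k (show m - a ≤ m by omega), Finset.mul_sum]
  apply Finset.sum_congr rfl
  intro t _
  rw [mul_ite, mul_zero]

noncomputable def Wc (n m : ℕ) : A :=
  ∑ k ∈ Finset.range (m + 1), (n + k).choose k • Pp v k m

lemma Wc_zero : Wc v n 0 = 1 := by
  simp [Wc, Pp_zero]

lemma Wc_ext (n : ℕ) {m N : ℕ} (h : m ≤ N) :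
    Wc v n m = ∑ k ∈ Finset.range (N + 1), (n + k).choose k • Pp v k m := by
  rw [Wc]
  apply Finset.sum_subset (Finset.range_subset_range.mpr (by omega))
  intro k _ hk
  rw [Pp_eq_zero v (by simp only [Finset.mem_range] at hk; omega), smul_zero]

lemma sum_part (n m : ℕ) :
    ∑ a ∈ Finset.Icc 1 m, v a * Wc v n (m - a)
      = ∑ k ∈ Finset.range (m + 1), (n + k).choose k • Pp v (k + 1) m := by
  have : ∀ a ∈ Finset.Icc 1 m, v a * Wc v n (m - a)
      = ∑ k ∈ Finset.range (m + 1), (n + k).choose k • (v a * Pp v k (m - a)) := by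
    intro a ha
    rw [Wc_ext v n (show m - a ≤ m by omega), Finset.mul_sum]
    exact Finset.sum_congr rfl fun k _ => mul_smul_comm _ _ _
  rw [Finset.sum_congr rfl this, Finset.sum_comm]
  apply Finset.sum_congr rfl
  intro k _
  rw [← Finset.smul_sum, Pp_succ]

lemma key (n m : ℕ) :
    Wc v n m = (∑ a ∈ Finset.Icc 1 m, v a * Wc v n (m - a))
      + (if n = 0 then (if m = 0 then (1 : A) else 0) else Wc v (n - 1) m) := by
  rw [sum_part]
  rw [show Wc v n m = ∑ k ∈ Finset.range (m+1), (n + k).choose k • Pp v k m from rfl]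
  rw [Finset.sum_range_succ']
  match n with
  | 0 =>
    simp only [if_pos rfl, zero_add, Nat.choose_self, one_smul, Nat.choose_zero_right]
    rw [Finset.sum_range_succ, Pp_eq_zero v (Nat.lt_succ_self m)]
    simp [Pp_zero]
  | n' + 1 =>
    simp only [Nat.add_sub_cancel, if_neg (Nat.succ_ne_zero n'), Nat.choose_zero_right, one_smul,
      Pp_zero]
    rw [show Wc v n' m = ∑ k ∈ Finset.range (m+1), (n' + k).choose k • Pp v k m from rfl,
      Finset.sum_range_succ' (fun k => (n' + k).choose k • Pp v k m) m]
    simp only [Nat.choose_zero_right, one_smul, Pp_zero]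
    rw [Finset.sum_range_succ (fun k => (n' + 1 + k).choose k • Pp v (k + 1) m) m,
      Pp_eq_zero v (Nat.lt_succ_self m), smul_zero, add_zero]
    rw [← add_assoc, ← Finset.sum_add_distrib]
    congr 1
    apply Finset.sum_congr rfl
    intro k _
    rw [← add_smul]
    congr 1
    have h1 : n' + 1 + (k + 1) = (n' + k + 1) + 1 := by omega
    have h2 : n' + 1 + k = n' + k + 1 := by omega
    have h3 : n' + (k + 1) = n' + k + 1 := by omega
    rw [h1, h2, h3, Nat.choose_succ_succ]

lemma Rp_eq (n m : ℕ) : (if m = 0 then (1 : A) else Rp v (n + m) m) = Wc v n m := by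
  rcases Nat.eq_zero_or_pos m with hm | hm
  · subst hm; rw [if_pos rfl, Wc_zero]
  · rw [if_neg (by omega)]
    have : Wc v n m = ∑ k ∈ Finset.Icc 1 m, (n + k).choose k • Pp v k m := by
      rw [Wc]
      refine (Finset.sum_subset (fun k hk => ?_) (fun k hk1 hk2 => ?_)).symm
      · simp only [Finset.mem_Icc] at hk; exact Finset.mem_range.mpr (by omega)
      · simp only [Finset.mem_range] at hk1
        simp only [Finset.mem_Icc, not_and, not_le] at hk2
        have : k = 0 := by omega
        subst this
        rw [Pp_zero, if_neg (by omega), smul_zero]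
    rw [this, Rp]
    apply Finset.sum_congr rfl
    intro k hk
    simp only [Finset.mem_Icc] at hk
    congr 2
    omega

lemma coeff_Rser (n : ℕ) :
    (PowerSeries.coeff n) (Rser v) = PowerSeries.mk (Wc v n) := by
  rw [Rser, PowerSeries.coeff_mk]
  exact PowerSeries.ext fun m => by rw [PowerSeries.coeff_mk, PowerSeries.coeff_mk, Rp_eq]

lemma ZWs (n : ℕ) :
    Zy v * PowerSeries.mk (Wc v n)
      = if n = 0 then 1 else PowerSeries.mk (Wc v (n - 1)) := by
  apply PowerSeries.ext
  intro m
  rw [PowerSeries.coeff_mul]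
  have h1 : ∀ p : ℕ × ℕ, (PowerSeries.coeff p.1) (Zy v) * (PowerSeries.coeff p.2)
      (PowerSeries.mk (Wc v n)) = (if p.1 = 0 then 1 else -(v p.1)) * Wc v n p.2 := by
    intro p; rw [Zy, PowerSeries.coeff_mk, PowerSeries.coeff_mk]
  simp only [h1]
  rw [Finset.Nat.sum_antidiagonal_eq_sum_range_succ_mk, Finset.sum_range_succ']
  simp only [Nat.succ_ne_zero, eq_self_iff_true, ite_true, ite_false, one_mul, neg_mul,
    Nat.sub_zero]
  have h3 : ∑ a ∈ Finset.Icc 1 m, v a * Wc v n (m - a)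
      = ∑ k ∈ Finset.range m, v (k + 1) * Wc v n (m - (k + 1)) := by
    rw [← Finset.Ico_add_one_right_eq_Icc, Finset.sum_Ico_eq_sum_range]
    simp only [Nat.add_sub_cancel]
    exact Finset.sum_congr rfl fun k _ => by rw [Nat.add_comm 1 k]
  have h2 : ∑ k ∈ Finset.range m, -(v (k + 1) * Wc v n (m - (k + 1)))
      = -∑ a ∈ Finset.Icc 1 m, v a * Wc v n (m - a) := by
    rw [h3, Finset.sum_neg_distrib]
  rw [h2, key v n m]
  rcases n with _ | n'
  · rw [if_pos rfl, if_pos rfl, PowerSeries.coeff_one]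
    rw [neg_add_cancel_left]
  · rw [if_neg (Nat.succ_ne_zero n'), if_neg (Nat.succ_ne_zero n'), PowerSeries.coeff_mk]
    simp only [Nat.add_sub_cancel]
    rw [neg_add_cancel_left]

end

/-- The generating function `R(x,y)` is the resolvent of `Z(y)`:
`(Z(y) - x) · R(x,y) = 1` in `A[[x,y]]`. -/
theorem resolvent_R {A : Type*} [Ring A] [Algebra ℂ A] (v : ℕ → A) :
    (PowerSeries.C (Zy v) - PowerSeries.X) * Rser v = 1 := by
  apply PowerSeries.ext
  intro n
  rw [sub_mul, map_sub, PowerSeries.coeff_C_mul, coeff_Rser, PowerSeries.coeff_one]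
  rcases n with _ | n'
  · rw [PowerSeries.coeff_zero_eq_constantCoeff, map_mul, PowerSeries.constantCoeff_X, zero_mul,
      sub_zero, ZWs, if_pos rfl, if_pos rfl]
  · rw [PowerSeries.coeff_succ_X_mul, coeff_Rser, ZWs, if_neg (Nat.succ_ne_zero n'),
      if_neg (Nat.succ_ne_zero n')]
    simp
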